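/- Let H be an entropy and n ∈ ℕ. Then for every i ∈ [n] and every p ∈ P(n): H(e_i^{(n)}) = 0, H(u_n) = log n, and 0 ≤ H(p) ≤ log n, where e_i^{(n)} ∈ P(n) is the deterministic vector with all mass on index i and u_n ∈ P(n) is the uniform vector. -/

import Mathlib

open scoped BigOperators ENNReal

/-- A probability vector: nonnegative entries summing to 1. -/
def IsProbVec {n : ℕ} (p : Fin n → ℝ) : Prop :=
  (∀ i, 0 ≤ p i) ∧ ∑ i, p i = 1

/-- The uniform probability vector on `n` outcomes. -/
noncomputable def uniform (n : ℕ) : Fin n → ℝ := fun _ => (n : ℝ)⁻¹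

/-- Kronecker (tensor) product of two vectors. -/
noncomputable def kron {n m : ℕ} (p : Fin n → ℝ) (q : Fin m → ℝ) : Fin (n * m) → ℝ :=
  fun i => p (finProdFinEquiv.symm i).1 * q (finProdFinEquiv.symm i).2

/-- Sum of the `k` largest entries (for vectors with nonnegative entries):
the supremum of sums over subsets of at most `k` indices. -/
noncomputable def maxPartialSum {n : ℕ} (p : Fin n → ℝ) (k : ℕ) : ℝ :=
  sSup { x | ∃ s : Finset (Fin n), s.card ≤ k ∧ ∑ i ∈ s, p i = x }

/-- `p` majorises `q`: every partial sum of the `k` largest entries of `p`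
dominates that of `q` (entries beyond a vector's length count as 0). -/
def Majorizes {n m : ℕ} (p : Fin n → ℝ) (q : Fin m → ℝ) : Prop :=
  ∀ k : ℕ, maxPartialSum q k ≤ maxPartialSum p k

/-- A channel: an `n × m` row-stochastic matrix. -/
def IsStochastic {n m : ℕ} (W : Matrix (Fin n) (Fin m) ℝ) : Prop :=
  (∀ i j, 0 ≤ W i j) ∧ ∀ i, ∑ j, W i j = 1

/-- Relative majorisation of pairs: some channel maps `(p, q)` to `(p', q')`. -/
def RelMaj {n m : ℕ} (p q : Fin n → ℝ) (p' q' : Fin m → ℝ) : Prop :=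
  ∃ W : Matrix (Fin n) (Fin m) ℝ, IsStochastic W ∧
    Matrix.vecMul p W = p' ∧ Matrix.vecMul q W = q'

/-- An entropy: a `[0,∞)`-valued function on probability vectors of all finite dimensions
that is monotone under mixing (majorisation), additive for Kronecker products,
and normalised so that `H(u₂) = log 2` (binary logarithm). -/
structure IsEntropy (H : (n : ℕ) → (Fin n → ℝ) → ℝ) : Prop where
  nonneg : ∀ {n : ℕ} (p : Fin n → ℝ), IsProbVec p → 0 ≤ H n p
  mono : ∀ {n m : ℕ} (p : Fin n → ℝ) (p' : Fin m → ℝ),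
    IsProbVec p → IsProbVec p' → Majorizes p p' → H n p ≤ H m p'
  additive : ∀ {n m : ℕ} (p : Fin n → ℝ) (q : Fin m → ℝ),
    IsProbVec p → IsProbVec q → H (n * m) (kron p q) = H n p + H m q
  normalized : H 2 (uniform 2) = Real.logb 2 2

/-- A monotone divergence: a `[0,∞]`-valued function on pairs of probability vectors of
equal finite dimension satisfying the data-processing inequality and `𝔻(1‖1) = 0`. -/
structure IsMonotoneDivergence (D : (n : ℕ) → (Fin n → ℝ) → (Fin n → ℝ) → ℝ≥0∞) : Prop where
  dpi : ∀ {n m : ℕ} (p q : Fin n → ℝ) (p' q' : Fin m → ℝ),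
    IsProbVec p → IsProbVec q → IsProbVec p' → IsProbVec q' →
    RelMaj p q p' q' → D m p' q' ≤ D n p q
  normalized : D 1 (fun _ => 1) (fun _ => 1) = 0

/-- A relative entropy: data-processing inequality, additivity for Kronecker products,
and the normalisation `𝔻(e₁‖u₂) = log 2` (binary logarithm). -/
structure IsRelativeEntropy (D : (n : ℕ) → (Fin n → ℝ) → (Fin n → ℝ) → ℝ≥0∞) : Prop where
  dpi : ∀ {n m : ℕ} (p q : Fin n → ℝ) (p' q' : Fin m → ℝ),
    IsProbVec p → IsProbVec q → IsProbVec p' → IsProbVec q' →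
    RelMaj p q p' q' → D m p' q' ≤ D n p q
  additive : ∀ {n m : ℕ} (p₁ q₁ : Fin n → ℝ) (p₂ q₂ : Fin m → ℝ),
    IsProbVec p₁ → IsProbVec q₁ → IsProbVec p₂ → IsProbVec q₂ →
    D (n * m) (kron p₁ p₂) (kron q₁ q₂) = D n p₁ q₁ + D m p₂ q₂
  normalized : D 2 ![1, 0] ![1/2, 1/2] = ENNReal.ofReal (Real.logb 2 2)

section AuxEntropy

variable {n m : ℕ}

lemma sum_subset_le_one {p : Fin n → ℝ} (hp : IsProbVec p) (s : Finset (Fin n)) :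
    ∑ i ∈ s, p i ≤ 1 := by
  rw [← hp.2]
  exact Finset.sum_le_sum_of_subset_of_nonneg (Finset.subset_univ s) fun i _ _ => hp.1 i

lemma mps_bddAbove {p : Fin n → ℝ} (hp : IsProbVec p) (k : ℕ) :
    BddAbove { x | ∃ s : Finset (Fin n), s.card ≤ k ∧ ∑ i ∈ s, p i = x } :=
  ⟨1, fun _ ⟨s, _, hs⟩ => hs ▸ sum_subset_le_one hp s⟩

lemma le_mps {p : Fin n → ℝ} (hp : IsProbVec p) {k : ℕ} {s : Finset (Fin n)}
    (h : s.card ≤ k) : ∑ i ∈ s, p i ≤ maxPartialSum p k :=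
  le_csSup (mps_bddAbove hp k) ⟨s, h, rfl⟩

lemma mps_le_one {p : Fin n → ℝ} (hp : IsProbVec p) (k : ℕ) :
    maxPartialSum p k ≤ 1 :=
  csSup_le ⟨0, ∅, by simp⟩ fun _ ⟨s, _, hs⟩ => hs ▸ sum_subset_le_one hp s

lemma mps_zero {p : Fin n → ℝ} (hp : IsProbVec p) : maxPartialSum p 0 = 0 := by
  refine le_antisymm (csSup_le ⟨0, ∅, by simp⟩ ?_) (le_csSup (mps_bddAbove hp 0) ⟨∅, by simp⟩)
  rintro x ⟨s, hs, rfl⟩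
  rw [Finset.card_eq_zero.mp (Nat.le_zero.mp hs)]
  simp

lemma det_isProbVec (i : Fin n) : IsProbVec (fun j => if j = i then (1:ℝ) else 0) := by
  constructor
  · intro j
    dsimp only
    split <;> norm_num
  · simp

lemma majorizes_det (i : Fin n) {q : Fin m → ℝ} (hq : IsProbVec q) :
    Majorizes (fun j => if j = i then (1:ℝ) else 0) q := by
  intro k
  cases k with
  | zero => rw [mps_zero hq, mps_zero (det_isProbVec i)]
  | succ k =>
    refine (mps_le_one hq _).trans ?_
    have : ∑ j ∈ {i}, (if j = i then (1:ℝ) else 0) = 1 := by simp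
    calc (1:ℝ) = ∑ j ∈ {i}, (if j = i then (1:ℝ) else 0) := this.symm
      _ ≤ _ := le_mps (det_isProbVec i) (by simp)

lemma kron_isProbVec {p : Fin n → ℝ} {q : Fin m → ℝ} (hp : IsProbVec p)
    (hq : IsProbVec q) : IsProbVec (kron p q) := by
  constructor
  · intro i; exact mul_nonneg (hp.1 _) (hq.1 _)
  · have h : ∑ i : Fin (n * m), kron p q i
        = ∑ x : Fin n × Fin m, p x.1 * q x.2 :=
      Fintype.sum_equiv finProdFinEquiv.symm _ _ (fun i => rfl)
    rw [h, Fintype.sum_prod_type]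
    simp_rw [← Finset.mul_sum, hq.2, mul_one]
    exact hp.2

lemma kron_det (i : Fin n) (i' : Fin m) :
    kron (fun j => if j = i then (1:ℝ) else 0) (fun j => if j = i' then (1:ℝ) else 0)
      = fun j => if j = finProdFinEquiv (i, i') then (1:ℝ) else 0 := by
  funext j
  unfold kron
  rcases eq_or_ne j (finProdFinEquiv (i, i')) with h | h
  · subst h; simp
  · rw [if_neg h]
    have h2 : finProdFinEquiv.symm j ≠ (i, i') := by
      intro hc
      exact h (by rw [← hc, Equiv.apply_symm_apply])
    show (if (finProdFinEquiv.symm j).1 = i then (1:ℝ) else 0)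
        * (if (finProdFinEquiv.symm j).2 = i' then (1:ℝ) else 0) = 0
    by_cases h1 : (finProdFinEquiv.symm j).1 = i
    · have h2' : (finProdFinEquiv.symm j).2 ≠ i' := by
        intro hc; exact h2 (Prod.ext h1 hc)
      rw [if_neg h2', mul_zero]
    · rw [if_neg h1, zero_mul]

lemma H_det {H : (n : ℕ) → (Fin n → ℝ) → ℝ} (hH : IsEntropy H) (i : Fin n) :
    H n (fun j => if j = i then (1:ℝ) else 0) = 0 := by
  set e : Fin n → ℝ := fun j => if j = i then (1:ℝ) else 0 with he
  have hpe : IsProbVec e := det_isProbVec i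
  have hpd : IsProbVec (kron e e) := kron_isProbVec hpe hpe
  have hkd : kron e e = fun j => if j = finProdFinEquiv (i, i) then (1:ℝ) else 0 :=
    kron_det i i
  have h1 : H (n * n) (kron e e) ≤ H n e := by
    apply hH.mono _ _ hpd hpe
    rw [hkd]
    exact majorizes_det _ hpe
  have h2 : H n e ≤ H (n * n) (kron e e) := by
    apply hH.mono _ _ hpe hpd
    exact majorizes_det _ hpd
  have h3 : H (n * n) (kron e e) = H n e + H n e := hH.additive e e hpe hpe
  linarith

lemma uniform_isProbVec (hn : 0 < n) : IsProbVec (uniform n) := by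
  constructor
  · intro i
    simp only [uniform]
    positivity
  · simp only [uniform, Finset.sum_const, Finset.card_univ, Fintype.card_fin,
      nsmul_eq_mul]
    field_simp

lemma kron_uniform : kron (uniform n) (uniform m) = uniform (n * m) := by
  funext j
  simp only [kron, uniform, Nat.cast_mul, mul_inv]

lemma mps_uniform (hn : 0 < n) (k : ℕ) :
    maxPartialSum (uniform n) k = ((min k n : ℕ) : ℝ) / n := by
  have hpu := uniform_isProbVec hn
  have hnR : (0:ℝ) < n := by exact_mod_cast hn
  apply le_antisymm
  · refine csSup_le ⟨0, ⟨∅, by simp⟩⟩ ?_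
    rintro x ⟨s, hs, rfl⟩
    have hcard : s.card ≤ min k n := le_min hs (by simpa using s.card_le_univ)
    simp only [uniform, Finset.sum_const, nsmul_eq_mul]
    rw [div_eq_mul_inv]
    apply mul_le_mul_of_nonneg_right _ (by positivity)
    exact_mod_cast hcard
  · obtain ⟨s, _, hcard⟩ := Finset.exists_subset_card_eq (s := (Finset.univ : Finset (Fin n)))
      (n := min k n) (by simp [min_le_right])
    have : ∑ i ∈ s, uniform n i = ((min k n : ℕ) : ℝ) / n := by
      simp only [uniform, Finset.sum_const, nsmul_eq_mul, hcard, div_eq_mul_inv]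
    rw [← this]
    exact le_mps hpu (hcard.le.trans (min_le_left _ _))

lemma majorizes_uniform_of_le (hm : 0 < m) (hmn : m ≤ n) :
    Majorizes (uniform m) (uniform n) := by
  have hn : 0 < n := hm.trans_le hmn
  intro k
  rw [mps_uniform hm, mps_uniform hn]
  have hmR : (0:ℝ) < m := by exact_mod_cast hm
  have hnR : (0:ℝ) < n := by exact_mod_cast hn
  rcases le_or_gt k m with h | h
  · rw [min_eq_left h, min_eq_left (h.trans hmn)]
    exact div_le_div_of_nonneg_left (by positivity) hmR (by exact_mod_cast hmn)
  · rw [min_eq_right h.le]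
    have h1 : ((min k n : ℕ) : ℝ) / n ≤ 1 := by
      rw [div_le_one hnR]
      exact_mod_cast min_le_right k n
    have h2 : (m : ℝ) / m = 1 := div_self hmR.ne'
    rw [h2]; exact h1

lemma exists_subset_card_sum_ge {p : Fin n → ℝ} (hp : IsProbVec p) :
    ∀ k, k ≤ n → ∃ s : Finset (Fin n), s.card = k ∧ (k : ℝ) / n ≤ ∑ i ∈ s, p i := by
  intro k
  induction k with
  | zero => exact fun _ => ⟨∅, rfl, by simp⟩
  | succ k ih =>
    intro hk
    have hkn : k < n := hk
    obtain ⟨s, hcard, hsum⟩ := ih hkn.le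
    have hn : 0 < n := by omega
    have hnR : (0:ℝ) < n := by exact_mod_cast hn
    have hne : sᶜ.Nonempty := by
      rw [← Finset.card_pos, Finset.card_compl, hcard, Fintype.card_fin]
      omega
    set c : ℕ := n - k with hc
    have hcardc : sᶜ.card = c := by
      rw [Finset.card_compl, hcard, Fintype.card_fin]
    have hc1 : 1 ≤ c := by omega
    have hcR : (1:ℝ) ≤ c := by exact_mod_cast hc1
    have hcR0 : (0:ℝ) < c := by linarith
    set S : ℝ := ∑ i ∈ s, p i with hS
    have hcompl : ∑ i ∈ sᶜ, p i = 1 - S := by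
      have := Finset.sum_add_sum_compl s p
      rw [hp.2] at this
      linarith
    obtain ⟨j, hj, hpj⟩ := Finset.exists_le_of_sum_le hne
      (f := fun _ => (1 - S) / c) (g := p) (by
        rw [Finset.sum_const, hcardc, hcompl, nsmul_eq_mul]
        rw [mul_div_cancel₀ _ hcR0.ne'])
    have hjs : j ∉ s := Finset.mem_compl.mp hj
    refine ⟨insert j s, by rw [Finset.card_insert_of_notMem hjs, hcard], ?_⟩
    rw [Finset.sum_insert hjs]
    -- key inequality
    have hcp : 1 - S ≤ c * p j := by
      rw [div_le_iff₀ hcR0] at hpj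
      linarith
    have hSn : (k : ℝ) ≤ S * n := by
      rw [div_le_iff₀ hnR] at hsum
      exact hsum
    have hS1 : S ≤ 1 := sum_subset_le_one hp s
    have hnck : (n : ℝ) = (k : ℝ) + c := by
      have : n = k + c := by omega
      exact_mod_cast this
    have hpj0 : 0 ≤ p j := hp.1 j
    rw [div_le_iff₀ hnR]
    have key : (c : ℝ) * (((k:ℝ) + 1)) ≤ c * ((p j + S) * n) := by
      nlinarith [mul_le_mul_of_nonneg_left hcp hnR.le,
        mul_le_mul_of_nonneg_left hSn (by linarith : (0:ℝ) ≤ (c:ℝ) - 1)]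
    have := le_of_mul_le_mul_left key hcR0
    push_cast
    linarith

lemma majorizes_to_uniform {p : Fin n → ℝ} (hp : IsProbVec p) (hn : 0 < n) :
    Majorizes p (uniform n) := by
  intro k
  rw [mps_uniform hn]
  obtain ⟨s, hcard, hsum⟩ := exists_subset_card_sum_ge hp (min k n) (min_le_right _ _)
  exact hsum.trans (le_mps hp (hcard.le.trans (min_le_left _ _)))

lemma uniform_one_eq_det : uniform 1 = fun j : Fin 1 => if j = 0 then (1:ℝ) else 0 := by
  funext j
  simp [uniform, Subsingleton.elim j 0]

lemma H_uniform_pow {H : (n : ℕ) → (Fin n → ℝ) → ℝ} (hH : IsEntropy H) (hn : 0 < n) :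
    ∀ k : ℕ, H (n ^ k) (uniform (n ^ k)) = k * H n (uniform n) := by
  intro k
  induction k with
  | zero =>
    simp only [Nat.cast_zero, zero_mul]
    rw [pow_zero, uniform_one_eq_det]
    exact H_det hH 0
  | succ k ih =>
    have h : H (n ^ k * n) (uniform (n ^ k * n)) = k * H n (uniform n) + H n (uniform n) := by
      rw [← kron_uniform,
        hH.additive _ _ (uniform_isProbVec (pow_pos hn k)) (uniform_isProbVec hn), ih]
    rw [pow_succ]
    rw [h]
    push_cast
    ring

lemma H_uniform_mono {H : (n : ℕ) → (Fin n → ℝ) → ℝ} (hH : IsEntropy H)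
    {a b : ℕ} (ha : 0 < a) (hab : a ≤ b) :
    H a (uniform a) ≤ H b (uniform b) :=
  hH.mono _ _ (uniform_isProbVec ha) (uniform_isProbVec (ha.trans_le hab))
    (majorizes_uniform_of_le ha hab)

lemma H_two_pow {H : (n : ℕ) → (Fin n → ℝ) → ℝ} (hH : IsEntropy H) (a : ℕ) :
    H (2 ^ a) (uniform (2 ^ a)) = a := by
  rw [H_uniform_pow hH (by norm_num) a, hH.normalized]
  rw [Real.logb_self_eq_one (by norm_num)]
  ring

lemma H_uniform {H : (n : ℕ) → (Fin n → ℝ) → ℝ} (hH : IsEntropy H) (hn : 0 < n) :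
    H n (uniform n) = Real.logb 2 n := by
  have key : ∀ k : ℕ, 0 < k → |H n (uniform n) - Real.logb 2 n| ≤ 1 / k := by
    intro k hk
    have hkR : (0:ℝ) < k := by exact_mod_cast hk
    set N : ℕ := n ^ k with hN
    have hNpos : 0 < N := pow_pos hn k
    set a : ℕ := Nat.log 2 N with ha
    have h1 : 2 ^ a ≤ N := Nat.pow_log_le_self 2 hNpos.ne'
    have h2 : N < 2 ^ (a + 1) := Nat.lt_pow_succ_log_self one_lt_two N
    have hfN : H N (uniform N) = k * H n (uniform n) := H_uniform_pow hH hn k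
    have hA : (a : ℝ) ≤ k * H n (uniform n) := by
      rw [← hfN, ← H_two_pow hH a]
      exact H_uniform_mono hH (pow_pos two_pos a) h1
    have hB : k * H n (uniform n) ≤ (a : ℝ) + 1 := by
      rw [← hfN]
      have := H_uniform_mono hH hNpos h2.le
      rw [H_two_pow hH (a + 1)] at this
      push_cast at this ⊢
      linarith
    have hNR : (0:ℝ) < (N:ℝ) := by exact_mod_cast hNpos
    have hlogN : Real.logb 2 (N : ℝ) = k * Real.logb 2 n := by
      rw [hN]
      push_cast
      rw [Real.logb_pow]
    have hL1 : (a : ℝ) ≤ k * Real.logb 2 n := by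
      rw [← hlogN]
      have h1R : (2:ℝ) ^ a ≤ (N:ℝ) := by exact_mod_cast h1
      have := Real.logb_le_logb_of_le (b := 2) (by norm_num) (by positivity) h1R
      rwa [Real.logb_pow, Real.logb_self_eq_one (by norm_num), mul_one] at this
    have hL2 : k * Real.logb 2 n ≤ (a : ℝ) + 1 := by
      rw [← hlogN]
      have h2R : (N:ℝ) ≤ (2:ℝ) ^ (a + 1) := by exact_mod_cast h2.le
      have := Real.logb_le_logb_of_le (b := 2) (by norm_num) hNR h2R
      rw [Real.logb_pow, Real.logb_self_eq_one (by norm_num), mul_one] at this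
      push_cast at this ⊢
      linarith
    rw [abs_le]
    refine ⟨by rw [neg_le, le_div_iff₀ hkR]; linarith, by rw [le_div_iff₀ hkR]; linarith⟩
  have habs : ∀ ε : ℝ, 0 < ε → |H n (uniform n) - Real.logb 2 n| ≤ ε := by
    intro ε hε
    obtain ⟨k, hk⟩ := exists_nat_one_div_lt hε
    exact (key (k + 1) k.succ_pos).trans (by exact_mod_cast hk.le)
  have h0 : |H n (uniform n) - Real.logb 2 n| ≤ 0 := by
    by_contra h
    push_neg at h
    exact absurd (habs _ (by linarith : (0:ℝ) < |H n (uniform n) - Real.logb 2 n| / 2))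
      (by linarith [abs_nonneg (H n (uniform n) - Real.logb 2 n)])
  have := abs_nonpos_iff.mp h0
  linarith [sub_eq_zero.mp this]

end AuxEntropy

/-- for an entropy `H`: `H(eᵢ⁽ⁿ⁾) = 0`, `H(uₙ) = log n` and
`0 ≤ H(p) ≤ log n` for every `p ∈ P(n)` (binary logarithm). -/
theorem stmt1 (H : (n : ℕ) → (Fin n → ℝ) → ℝ) (hH : IsEntropy H) (n : ℕ) :
    ∀ (i : Fin n) (p : Fin n → ℝ), IsProbVec p →
      H n (fun j => if j = i then 1 else 0) = 0 ∧
      H n (uniform n) = Real.logb 2 n ∧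
      0 ≤ H n p ∧ H n p ≤ Real.logb 2 n := by
  intro i p hp
  have hn : 0 < n := i.pos
  refine ⟨H_det hH i, H_uniform hH hn, hH.nonneg p hp, ?_⟩
  rw [← H_uniform hH hn]
  exact hH.mono p (uniform n) hp (uniform_isProbVec hn) (majorizes_to_uniform hp hn)
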